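/- For constants c > 0, α₀ ∈ (0,1), α_c > 0, α_d > 0 with α₀ - α_c > 0 and α₀ - α_d > 0, the function u(a) = -(α₀ + α_d·a)·a·c for a ∈ [-1,0] and u(a) = -(a/(α₀ - α_c·a))·c for a ∈ (0,1] is strictly concave on [-1,1]. -/

import Mathlib

set_option maxHeartbeats 1000000 in

/-- The prosumer's single-stage payoff u is strictly concave on [-1,1]. -/
theorem payoff_strictConcave (α₀ αc αd c : ℝ) (hα₀ : α₀ ∈ Set.Ioo (0:ℝ) 1)
    (hαc : 0 < αc) (hαd : 0 < αd) (hcα : 0 < α₀ - αc) (hdα : 0 < α₀ - αd)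
    (hc : 0 < c) :
    StrictConcaveOn ℝ (Set.Icc (-1 : ℝ) 1)
      (fun a : ℝ => if a ≤ 0 then -(α₀ + αd * a) * a * c
        else -(a / (α₀ - αc * a)) * c) := by
  obtain ⟨hα0, hα1⟩ := hα₀
  set u : ℝ → ℝ := fun a : ℝ => if a ≤ 0 then -(α₀ + αd * a) * a * c
        else -(a / (α₀ - αc * a)) * c with hu
  have hD : ∀ p : ℝ, p ≤ 1 → 0 < α₀ - αc * p := by
    intro p hp; nlinarith
  have hgl : ∀ p : ℝ, p ≤ 0 → u p = -(α₀ + αd * p) * p * c := by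
    intro p hp; simp only [hu, if_pos hp]
  have hgr : ∀ p : ℝ, 0 ≤ p → u p = -(p / (α₀ - αc * p)) * c := by
    intro p hp
    rcases hp.eq_or_lt with h | h
    · simp only [hu, ← h, le_refl, if_pos]; ring
    · simp only [hu, if_neg (not_le.2 h)]
  apply strictConcaveOn_of_slope_strict_anti_adjacent (convex_Icc _ _)
  intro x y z hx hz hxy hyz
  obtain ⟨hx1, hx2⟩ := hx
  obtain ⟨hz1, hz2⟩ := hz
  have hy2 : y ≤ 1 := le_of_lt (hyz.trans_le hz2)
  show (u z - u y) / (z - y) < (u y - u x) / (y - x)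
  -- slope formulas
  have sL : ∀ p q : ℝ, p < q → q ≤ 0 →
      (u q - u p) / (q - p) = -(c * (α₀ + αd * (p + q))) := by
    intro p q hpq hq0
    rw [hgl p (hpq.le.trans hq0), hgl q hq0]
    have : q - p ≠ 0 := by linarith
    field_simp
    ring
  have sR : ∀ p q : ℝ, 0 ≤ p → p < q → q ≤ 1 →
      (u q - u p) / (q - p) = -(c * α₀) / ((α₀ - αc * p) * (α₀ - αc * q)) := by
    intro p q hp0 hpq hq1
    rw [hgr p hp0, hgr q (hp0.trans hpq.le)]
    have hDp := hD p (by linarith)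
    have hDq := hD q hq1
    have : q - p ≠ 0 := by linarith
    have hDp' := hDp.ne'
    have hDq' := hDq.ne'
    rw [div_eq_div_iff this (mul_ne_zero hDp' hDq')]
    linear_combination (-c * (α₀ - αc * p)) * div_mul_cancel₀ q hDq' + (c * (α₀ - αc * q)) * div_mul_cancel₀ p hDp'
  rcases le_or_gt z 0 with hz0 | hz0
  · -- all left
    have hy0 : y ≤ 0 := hyz.le.trans hz0
    rw [sL x y hxy hy0, sL y z hyz hz0]
    nlinarith [mul_pos (mul_pos hc hαd) (sub_pos.2 (hxy.trans hyz))]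
  · rcases le_or_gt y 0 with hy0 | hy0
    · -- x < y ≤ 0 < z : mixed, kink on right of y
      have hx0 : x < 0 := hxy.trans_le hy0
      have hDz := hD z hz2
      rw [sL x y hxy hy0, div_lt_iff₀ (by linarith : (0:ℝ) < z - y)]
      have huz : u z = z * (-c / (α₀ - αc * z)) := by
        rw [hgr z hz0.le]; field_simp
      have huy : u y = y * (-(α₀ + αd * y) * c) := by
        rw [hgl y hy0]; ring
      have h1 : -(α₀ + αd * y) * c ≤ -(c * (α₀ + αd * (x + y))) := by
        nlinarith [mul_pos (mul_pos hc hαd) (neg_pos.2 hx0)]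
      have h2 : -c / (α₀ - αc * z) < -(c * (α₀ + αd * (x + y))) := by
        have h2a : -c / (α₀ - αc * z) < -(c * α₀) := by
          rw [div_lt_iff₀ hDz]
          nlinarith [mul_pos (mul_pos hc (by linarith : (0:ℝ) < 1 - α₀))
              (by linarith : (0:ℝ) < 1 + α₀),
            mul_pos (mul_pos (mul_pos hc hα0) hαc) hz0]
        have h2b : -(c * α₀) < -(c * (α₀ + αd * (x + y))) := by
          nlinarith [mul_pos (mul_pos hc hαd) (by linarith : (0:ℝ) < -(x + y))]
        linarith
      rw [huz, huy]
      nlinarith [mul_pos hz0 (sub_pos.2 h2),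
        mul_nonneg (neg_nonneg.2 hy0) (sub_nonneg.2 h1)]
    · -- 0 < y
      have hDy := hD y hy2
      have hDz := hD z hz2
      rcases lt_or_ge 0 x with hx0 | hx0
      · -- all right
        have hDx := hD x hx2
        rw [sR x y hx0.le hxy hy2, sR y z hy0.le hyz hz2,
          div_lt_div_iff₀ (mul_pos hDy hDz) (mul_pos hDx hDy)]
        have hlt : (α₀ - αc * y) * (α₀ - αc * z) < (α₀ - αc * x) * (α₀ - αc * y) := by
          nlinarith [mul_pos hDy (mul_pos hαc (sub_pos.2 (hxy.trans hyz)))]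
        have hneg : -(c * α₀) < 0 := neg_lt_zero.mpr (mul_pos hc hα0)
        exact mul_lt_mul_of_neg_left hlt hneg
      · -- x ≤ 0 < y : mixed, kink on left of y
        rw [sR y z hy0.le hyz hz2, lt_div_iff₀ (by linarith : (0:ℝ) < y - x)]
        have huy : u y = y * (-c / (α₀ - αc * y)) := by
          rw [hgr y hy0.le]; field_simp
        have hux : u x = x * (-(α₀ + αd * x) * c) := by
          rw [hgl x hx0]; ring
        have hB1 : -(c * α₀) / ((α₀ - αc * y) * (α₀ - αc * z)) < -c / (α₀ - αc * y) := by
          rw [div_lt_div_iff₀ (mul_pos hDy hDz) hDy]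
          nlinarith [mul_pos (mul_pos hc hDy) (mul_pos hαc hz0)]
        have hBα : -(c * α₀) / ((α₀ - αc * y) * (α₀ - αc * z)) < -(c * α₀) := by
          rw [div_lt_iff₀ (mul_pos hDy hDz)]
          have hDz1 : α₀ - αc * z < 1 := by nlinarith [mul_pos hαc hz0]
          have hP : (α₀ - αc * y) * (α₀ - αc * z) < 1 := by
            nlinarith [mul_lt_mul_of_pos_left hDz1 hDy]
          nlinarith [mul_lt_mul_of_pos_left hP (mul_pos hc hα0)]
        have hB2 : -(c * α₀) / ((α₀ - αc * y) * (α₀ - αc * z)) ≤ -(α₀ + αd * x) * c := by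
          nlinarith [mul_nonneg (mul_pos hc hαd).le (neg_nonneg.2 hx0)]
        rw [huy, hux]
        nlinarith [mul_pos hy0 (sub_pos.2 hB1),
          mul_nonneg (neg_nonneg.2 hx0) (sub_nonneg.2 hB2)]
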